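/- Let σ > 1, μ ∈ (0,1), F > 0, τ > 0, ρ > 0, Λ > 0, Φ > 0, and set α := τ(σ−1), λ̄ := Λ/(2πρ), φ̄ := Φ/(2πρ), Ḡ := [2λ̄(1 − e^{−αρπ})/(Fα)]^{1/(1−σ)}, w̄ := (μφ̄/(σλ̄))/(1 − μ/σ), and Ȳ := w̄λ̄ + φ̄. Then the constant functions λ ≡ λ̄, G ≡ Ḡ, w ≡ w̄ solve the instantaneous equilibrium equations on the circle of radius ρ: for all θ ∈ [−π,π], Ḡ = [(1/F)∫_{−π}^{π} λ̄·e^{−α d(ρθ,ρθ′)} ρ dθ′]^{1/(1−σ)} and w̄ = (μ/(σF))∫_{−π}^{π} Ȳ·Ḡ^{σ−1}·e^{−α d(ρθ,ρθ′)} ρ dθ′; moreover w̄ ≥ 0, Ḡ ≥ 0, Ȳ ≥ 0, and the real wage ω ≡ w̄·Ḡ^{−μ} is constant, so that λ ≡ λ̄ is a stationary solution of the migration dynamics ∂λ/∂t = v[ω − (1/Λ)∫ ωλ]λ. -/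

import Mathlib

open Real

/-- Distance on the circle of radius `ρ` between the points with angles `θ` and `θ'`. -/
noncomputable def dCirc (ρ θ θ' : ℝ) : ℝ := ρ * min |θ - θ'| (2 * π - |θ - θ'|)


lemma int_exp_lin (b c A B : ℝ) (hb : b ≠ 0) :
    ∫ x in A..B, Real.exp (b * x + c)
      = (Real.exp (b * B + c) - Real.exp (b * A + c)) / b := by
  have h : ∀ x ∈ Set.uIcc A B,
      HasDerivAt (fun x => Real.exp (b * x + c) / b) (Real.exp (b * x + c)) x := by
    intro x _
    have h1 : HasDerivAt (fun x : ℝ => b * x + c) b x :=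
      by simpa using ((hasDerivAt_id x).const_mul b).add_const c
    have h2 := ((Real.hasDerivAt_exp (b * x + c)).comp x h1).div_const b
    rw [mul_div_cancel_right₀ _ hb] at h2
    exact h2
  rw [intervalIntegral.integral_eq_sub_of_hasDerivAt h
    ((by continuity : Continuous fun x => Real.exp (b * x + c)).intervalIntegrable _ _)]
  ring

lemma circ_int_pos (β θ : ℝ) (hβ : 0 < β) (hθ0 : 0 ≤ θ) (hθπ : θ ≤ π) :
    ∫ θ' in (-π)..π, Real.exp (-(β * min |θ - θ'| (2 * π - |θ - θ'|)))
      = (2 - 2 * Real.exp (-(β * π))) / β := by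
  have hπ := Real.pi_pos
  have hcont : Continuous fun θ' : ℝ =>
      Real.exp (-(β * min |θ - θ'| (2 * π - |θ - θ'|))) := by continuity
  have hb : -β ≠ 0 := by linarith
  have hb' : β ≠ 0 := hβ.ne'
  -- piece 1 : from -π to θ - π
  have p1 : ∫ θ' in (-π)..(θ - π),
      Real.exp (-(β * min |θ - θ'| (2 * π - |θ - θ'|)))
        = (Real.exp (-(β*π)) - Real.exp (-(β*(π - θ)))) / (-β) := by
    rw [intervalIntegral.integral_congr (g := fun θ' => Real.exp ((-β) * θ' + (β*θ - 2*β*π)))]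
    · rw [int_exp_lin _ _ _ _ hb]
      ring_nf
    · intro x hx
      rw [Set.uIcc_of_le (by linarith)] at hx
      obtain ⟨h1, h2⟩ := hx
      have habs : |θ - x| = θ - x := abs_of_nonneg (by linarith)
      have hmin : min |θ - x| (2*π - |θ - x|) = 2*π - |θ - x| :=
        min_eq_right (by rw [habs]; linarith)
      dsimp only
      rw [hmin, habs]
      congr 1
      ring
  -- piece 2 : from θ - π to θ
  have p2 : ∫ θ' in (θ - π)..θ,
      Real.exp (-(β * min |θ - θ'| (2 * π - |θ - θ'|)))
        = (Real.exp 0 - Real.exp (-(β*π))) / β := by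
    rw [intervalIntegral.integral_congr (g := fun θ' => Real.exp (β * θ' + (-(β*θ))))]
    · rw [int_exp_lin _ _ _ _ hb']
      ring_nf
    · intro x hx
      rw [Set.uIcc_of_le (by linarith)] at hx
      obtain ⟨h1, h2⟩ := hx
      have habs : |θ - x| = θ - x := abs_of_nonneg (by linarith)
      have hmin : min |θ - x| (2*π - |θ - x|) = |θ - x| :=
        min_eq_left (by rw [habs]; linarith)
      dsimp only
      rw [hmin, habs]
      congr 1
      ring
  -- piece 3 : from θ to π
  have p3 : ∫ θ' in θ..π,
      Real.exp (-(β * min |θ - θ'| (2 * π - |θ - θ'|)))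
        = (Real.exp (-(β*(π - θ))) - Real.exp 0) / (-β) := by
    rw [intervalIntegral.integral_congr (g := fun θ' => Real.exp ((-β) * θ' + β*θ))]
    · rw [int_exp_lin _ _ _ _ hb]
      ring_nf
    · intro x hx
      rw [Set.uIcc_of_le (by linarith)] at hx
      obtain ⟨h1, h2⟩ := hx
      have habs : |θ - x| = x - θ := by rw [abs_sub_comm]; exact abs_of_nonneg (by linarith)
      have hmin : min |θ - x| (2*π - |θ - x|) = |θ - x| :=
        min_eq_left (by rw [habs]; linarith)
      dsimp only
      rw [hmin, habs]
      congr 1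
      ring
  have hII : ∀ a b : ℝ, IntervalIntegrable
      (fun θ' => Real.exp (-(β * min |θ - θ'| (2 * π - |θ - θ'|))))
      MeasureTheory.volume a b := fun a b => hcont.intervalIntegrable a b
  have s1 := intervalIntegral.integral_add_adjacent_intervals
    (a := -π) (b := θ - π) (c := θ) (hII _ _) (hII _ _)
  have s2 := intervalIntegral.integral_add_adjacent_intervals
    (a := -π) (b := θ) (c := π) (hII _ _) (hII _ _)
  rw [← s2, ← s1, p1, p2, p3]
  rw [Real.exp_zero]
  field_simp
  ring

lemma circ_int (β θ : ℝ) (hβ : 0 < β) (hθ : θ ∈ Set.Icc (-π) π) :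
    ∫ θ' in (-π)..π, Real.exp (-(β * min |θ - θ'| (2 * π - |θ - θ'|)))
      = (2 - 2 * Real.exp (-(β * π))) / β := by
  rcases le_total 0 θ with h | h
  · exact circ_int_pos β θ hβ h hθ.2
  · have key := circ_int_pos β (-θ) hβ (by linarith) (by linarith [hθ.1])
    have hneg := intervalIntegral.integral_comp_neg
      (a := -π) (b := π)
      (fun θ' => Real.exp (-(β * min |θ - θ'| (2 * π - |θ - θ'|))))
    rw [neg_neg] at hneg
    rw [← hneg]
    rw [← key]
    apply intervalIntegral.integral_congr
    intro x _
    have : |θ - -x| = |(-θ) - x| := by rw [← abs_neg]; ring_nf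
    dsimp only
    rw [this]

theorem homogeneous_stationary_solution (σ μ F τ ρ Λ Φ : ℝ)
    (hσ : 1 < σ) (hμ : μ ∈ Set.Ioo (0 : ℝ) 1) (hF : 0 < F) (hτ : 0 < τ)
    (hρ : 0 < ρ) (hΛ : 0 < Λ) (hΦ : 0 < Φ)
    (α lbar pbar Gbar wbar Ybar : ℝ)
    (hα : α = τ * (σ - 1))
    (hlbar : lbar = Λ / (2 * π * ρ))
    (hpbar : pbar = Φ / (2 * π * ρ))
    (hGbar : Gbar = (2 * lbar * (1 - Real.exp (-(α * ρ * π))) / (F * α)) ^ (1 / (1 - σ)))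
    (hwbar : wbar = (μ * pbar / (σ * lbar)) / (1 - μ / σ))
    (hYbar : Ybar = wbar * lbar + pbar) :
    (∀ θ ∈ Set.Icc (-π) π,
      Gbar = ((1 / F) * ∫ θ' in (-π)..π, lbar * Real.exp (-(α * dCirc ρ θ θ')) * ρ)
        ^ (1 / (1 - σ))) ∧
    (∀ θ ∈ Set.Icc (-π) π,
      wbar = (μ / (σ * F)) *
        ∫ θ' in (-π)..π, Ybar * Gbar ^ (σ - 1) * Real.exp (-(α * dCirc ρ θ θ')) * ρ) ∧
    0 ≤ wbar ∧ 0 ≤ Gbar ∧ 0 ≤ Ybar ∧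
    (∀ v : ℝ,
      v * (wbar * Gbar ^ (-μ) -
        (1 / Λ) * ∫ θ in (-π)..π, wbar * Gbar ^ (-μ) * lbar * ρ) * lbar = 0) := by
  obtain ⟨hμ0, hμ1⟩ := hμ
  have hπ := Real.pi_pos
  have hσ0 : 0 < σ := by linarith
  have hα0 : 0 < α := by rw [hα]; nlinarith
  have hβ : 0 < α * ρ := mul_pos hα0 hρ
  have hl0 : 0 < lbar := by rw [hlbar]; positivity
  have hp0 : 0 < pbar := by rw [hpbar]; positivity
  set E := Real.exp (-(α * ρ * π)) with hE
  have hE1 : E < 1 := by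
    rw [hE, Real.exp_lt_one_iff]
    nlinarith
  have hbase : 0 < 2 * lbar * (1 - E) / (F * α) := by
    apply div_pos ?_ (by positivity)
    nlinarith
  have hint : ∀ θ ∈ Set.Icc (-π) π,
      (∫ θ' in (-π)..π, Real.exp (-(α * dCirc ρ θ θ'))) = (2 - 2 * E) / (α * ρ) := by
    intro θ hθ
    rw [← circ_int (α * ρ) θ hβ hθ]
    apply intervalIntegral.integral_congr
    intro x _
    dsimp only [dCirc]
    congr 1
    ring
  have h1μσ : 0 < 1 - μ / σ := by
    rw [sub_pos]
    exact (div_lt_one hσ0).mpr (by linarith)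
  have hw0 : 0 ≤ wbar := by
    rw [hwbar]
    exact le_of_lt (div_pos (div_pos (by positivity) (by positivity)) h1μσ)
  have hG0 : 0 ≤ Gbar := by rw [hGbar]; exact Real.rpow_nonneg hbase.le _
  have hY0 : 0 ≤ Ybar := by
    rw [hYbar]
    exact add_nonneg (mul_nonneg hw0 hl0.le) hp0.le
  have hw : wbar * (σ * lbar) = μ * Ybar := by
    have hsμ : σ - μ ≠ 0 := by linarith
    have h1 : wbar = μ * pbar / (lbar * (σ - μ)) := by
      rw [hwbar]
      field_simp
    rw [hYbar, h1]
    field_simp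
    ring
  refine ⟨?_, ?_, hw0, hG0, hY0, ?_⟩
  · intro θ hθ
    have hi1 : (∫ θ' in (-π)..π, lbar * Real.exp (-(α * dCirc ρ θ θ')) * ρ)
        = (lbar * ρ) * ((2 - 2 * E) / (α * ρ)) := by
      rw [← hint θ hθ, ← intervalIntegral.integral_const_mul]
      apply intervalIntegral.integral_congr
      intro x _
      dsimp only
      ring
    rw [hi1, hGbar]
    congr 1
    field_simp
  · intro θ hθ
    have hG1 : Gbar ^ (σ - 1) = (2 * lbar * (1 - E) / (F * α))⁻¹ := by
      have hs1 : (1 : ℝ) - σ ≠ 0 := by linarith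
      have hm1 : (1 / (1 - σ)) * (σ - 1) = -1 := by field_simp; ring
      rw [hGbar, ← Real.rpow_mul hbase.le, hm1, Real.rpow_neg_one]
    have hi2 : (∫ θ' in (-π)..π, Ybar * Gbar ^ (σ - 1) * Real.exp (-(α * dCirc ρ θ θ')) * ρ)
        = (Ybar * Gbar ^ (σ - 1) * ρ) * ((2 - 2 * E) / (α * ρ)) := by
      rw [← hint θ hθ, ← intervalIntegral.integral_const_mul]
      apply intervalIntegral.integral_congr
      intro x _
      dsimp only
      ring
    have hr : (μ / (σ * F)) * ((Ybar * (2 * lbar * (1 - E) / (F * α))⁻¹ * ρ)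
        * ((2 - 2 * E) / (α * ρ))) = μ * Ybar / (σ * lbar) := by
      have h1E : (1 : ℝ) - E ≠ 0 := by linarith
      field_simp
    rw [hi2, hG1, hr, eq_div_iff (by positivity)]
    exact hw
  · intro v
    rw [intervalIntegral.integral_const]
    have hz : wbar * Gbar ^ (-μ) - (1 / Λ) * ((π - -π) • (wbar * Gbar ^ (-μ) * lbar * ρ)) = 0 := by
      rw [hlbar, smul_eq_mul]
      field_simp
      ring
    rw [hz, mul_zero, zero_mul]
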